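/- Let ε ∈ (0,1), let d, t be positive integers, and let μ ∈ ℝ^d. Let p denote the density of N(μ, I_d), let f : ℝ^d → ℝ be any measurable function satisfying (1−ε)·p(x) ≤ f(x) ≤ p(x) for all x ∈ ℝ^d, and let P' denote the probability distribution on ℝ^d with density f(x)/∫_{ℝ^d} f. Then for every polynomial q : ℝ^d → ℝ of total degree at most t with E_{z∼N(0,I_d)}[q(z)²] = 1, it holds that E_{x∼P'}[q(x)] ≤ (1/(1−ε))·( |E_{x∼N(μ,I_d)}[q(x)]| + √ε · e^{t‖μ‖₂²/2} ). -/

import Mathlib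

open MeasureTheory

/-- The probability density function of the Gaussian `N(μ, I_d)` on `ℝ^d`. -/
noncomputable def mvGaussPDF (d : ℕ) (μ x : EuclideanSpace ℝ (Fin d)) : ℝ :=
  (2 * Real.pi) ^ (-(d : ℝ) / 2) * Real.exp (-‖x - μ‖ ^ 2 / 2)

lemma mvGauss_pos (d : ℕ) (ν x : EuclideanSpace ℝ (Fin d)) : 0 < mvGaussPDF d ν x := by
  unfold mvGaussPDF
  positivity

lemma mvGauss_cont (d : ℕ) (ν : EuclideanSpace ℝ (Fin d)) : Continuous (mvGaussPDF d ν) := by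
  unfold mvGaussPDF
  fun_prop

lemma aux_exp_bound (n : ℕ) {r : ℝ} (hr : 0 ≤ r) :
    (1 + r) ^ n ≤ (2 ^ n + n.factorial * 8 ^ n) * Real.exp (r ^ 2 / 4) := by
  have hexp1 : (1 : ℝ) ≤ Real.exp (r ^ 2 / 4) := Real.one_le_exp (by positivity)
  have hfac : (0:ℝ) ≤ (n.factorial : ℝ) * 8 ^ n := by positivity
  rcases le_total r 1 with h | h
  · calc (1 + r) ^ n ≤ 2 ^ n := pow_le_pow_left₀ (by linarith) (by linarith) n
      _ ≤ 2 ^ n * Real.exp (r ^ 2 / 4) := le_mul_of_one_le_right (by positivity) hexp1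
      _ ≤ (2 ^ n + n.factorial * 8 ^ n) * Real.exp (r ^ 2 / 4) := by
          apply mul_le_mul_of_nonneg_right _ (Real.exp_pos _).le
          linarith
  · have h1 : (1 + r) ^ n ≤ (2 * r) ^ n := pow_le_pow_left₀ (by linarith) (by linarith) n
    have h2 : r ^ n ≤ (r ^ 2) ^ n := by
      rw [← pow_mul]
      exact pow_le_pow_right₀ h (by omega)
    have h3 : (r ^ 2 / 4) ^ n / n.factorial ≤ Real.exp (r ^ 2 / 4) :=
      Real.pow_div_factorial_le_exp (x := r ^ 2 / 4) (by positivity) n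
    have h4 : (r ^ 2) ^ n = 4 ^ n * (r ^ 2 / 4) ^ n := by
      rw [div_pow, mul_div_cancel₀]
      positivity
    have hfn : (0:ℝ) < n.factorial := by positivity
    calc (1 + r) ^ n ≤ (2 * r) ^ n := h1
      _ = 2 ^ n * r ^ n := mul_pow 2 r n
      _ ≤ 2 ^ n * (r ^ 2) ^ n := by
          apply mul_le_mul_of_nonneg_left h2 (by positivity)
      _ = 2 ^ n * 4 ^ n * (r ^ 2 / 4) ^ n := by rw [h4]; ring
      _ ≤ 2 ^ n * 4 ^ n * (n.factorial * Real.exp (r ^ 2 / 4)) := by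
          apply mul_le_mul_of_nonneg_left _ (by positivity)
          rw [div_le_iff₀ hfn] at h3
          linarith [h3]
      _ = (n.factorial * 8 ^ n) * Real.exp (r ^ 2 / 4) := by
          rw [show (8:ℝ) ^ n = 2 ^ n * 4 ^ n by rw [← mul_pow]; norm_num]
          ring
      _ ≤ (2 ^ n + n.factorial * 8 ^ n) * Real.exp (r ^ 2 / 4) := by
          apply mul_le_mul_of_nonneg_right _ (Real.exp_pos _).le
          have : (0:ℝ) ≤ 2 ^ n := by positivity
          linarith

lemma gauss_exp_integrable (d : ℕ) {b : ℝ} (hb : 0 < b) :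
    Integrable (fun x : EuclideanSpace ℝ (Fin d) => Real.exp (-b * ‖x‖ ^ 2)) := by
  have h := (GaussianFourier.integrable_cexp_neg_mul_sq_norm_add
    (V := EuclideanSpace ℝ (Fin d)) (b := (b : ℂ)) (by simpa using hb) 0 0).norm
  refine h.congr (Filter.Eventually.of_forall fun x => ?_)
  simp [Complex.norm_exp, ← Complex.ofReal_pow]

lemma poly_gauss_integrable (d n : ℕ) (ν : EuclideanSpace ℝ (Fin d)) :
    Integrable (fun x : EuclideanSpace ℝ (Fin d) =>
      (1 + ‖x‖) ^ n * Real.exp (-‖x - ν‖ ^ 2 / 2)) := by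
  have base : Integrable (fun x : EuclideanSpace ℝ (Fin d) =>
      (1 + ‖x‖) ^ n * Real.exp (-‖x‖ ^ 2 / 2)) := by
    refine Integrable.mono'
      ((gauss_exp_integrable d (show (0:ℝ) < 1/4 by norm_num)).const_mul
        (2 ^ n + n.factorial * 8 ^ n)) (Continuous.aestronglyMeasurable (by fun_prop)) ?_
    refine Filter.Eventually.of_forall fun x => ?_
    rw [Real.norm_eq_abs, abs_of_nonneg (by positivity)]
    calc (1 + ‖x‖) ^ n * Real.exp (-‖x‖ ^ 2 / 2)
        ≤ ((2 ^ n + n.factorial * 8 ^ n) * Real.exp (‖x‖ ^ 2 / 4)) * Real.exp (-‖x‖ ^ 2 / 2) :=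
          mul_le_mul_of_nonneg_right (aux_exp_bound n (norm_nonneg x)) (Real.exp_pos _).le
      _ = (2 ^ n + n.factorial * 8 ^ n) * Real.exp (-(1/4) * ‖x‖ ^ 2) := by
          rw [mul_assoc, ← Real.exp_add]
          ring_nf
  have F_int : Integrable (fun y : EuclideanSpace ℝ (Fin d) =>
      (1 + ‖y + ν‖) ^ n * Real.exp (-‖y‖ ^ 2 / 2)) := by
    refine Integrable.mono' (base.const_mul ((1 + ‖ν‖) ^ n)) (Continuous.aestronglyMeasurable (by fun_prop)) ?_
    refine Filter.Eventually.of_forall fun y => ?_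
    rw [Real.norm_eq_abs, abs_of_nonneg (by positivity)]
    have h1 : 1 + ‖y + ν‖ ≤ (1 + ‖ν‖) * (1 + ‖y‖) := by
      have := norm_add_le y ν
      nlinarith [norm_nonneg y, norm_nonneg ν]
    calc (1 + ‖y + ν‖) ^ n * Real.exp (-‖y‖ ^ 2 / 2)
        ≤ ((1 + ‖ν‖) * (1 + ‖y‖)) ^ n * Real.exp (-‖y‖ ^ 2 / 2) :=
          mul_le_mul_of_nonneg_right (pow_le_pow_left₀ (by positivity) h1 n) (Real.exp_pos _).le
      _ = (1 + ‖ν‖) ^ n * ((1 + ‖y‖) ^ n * Real.exp (-‖y‖ ^ 2 / 2)) := by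
          rw [mul_pow]; ring
  have h := F_int.comp_sub_right ν
  refine h.congr (Filter.Eventually.of_forall fun x => ?_)
  simp

lemma gauss_pdf_integrable (d : ℕ) (ν : EuclideanSpace ℝ (Fin d)) :
    Integrable (mvGaussPDF d ν) := by
  have h := (poly_gauss_integrable d 0 ν).const_mul ((2 * Real.pi) ^ (-(d:ℝ) / 2))
  refine h.congr (Filter.Eventually.of_forall fun x => ?_)
  simp [mvGaussPDF]

lemma gauss_integral (d : ℕ) (ν : EuclideanSpace ℝ (Fin d)) :
    ∫ x, mvGaussPDF d ν x = 1 := by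
  unfold mvGaussPDF
  rw [integral_const_mul]
  have h1 : ∫ x : EuclideanSpace ℝ (Fin d), Real.exp (-‖x - ν‖ ^ 2 / 2)
      = ∫ x : EuclideanSpace ℝ (Fin d), Real.exp (-(1/2 : ℝ) * ‖x‖ ^ 2) := by
    rw [← integral_sub_right_eq_self
      (fun x : EuclideanSpace ℝ (Fin d) => Real.exp (-(1/2 : ℝ) * ‖x‖ ^ 2)) ν]
    congr 1
    funext x
    congr 1
    ring
  rw [h1, GaussianFourier.integral_rexp_neg_mul_sq_norm (by norm_num : (0:ℝ) < 1/2),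
    finrank_euclideanSpace_fin]
  rw [show Real.pi / (1/2 : ℝ) = 2 * Real.pi by ring]
  rw [← Real.rpow_add (by positivity), show -(d:ℝ)/2 + (d:ℝ)/2 = 0 by ring, Real.rpow_zero]

lemma coord_le_norm (d : ℕ) (x : EuclideanSpace ℝ (Fin d)) (i : Fin d) : |x i| ≤ ‖x‖ := by
  rw [EuclideanSpace.norm_eq]
  calc |x i| = Real.sqrt ((x i) ^ 2) := (Real.sqrt_sq_eq_abs _).symm
    _ ≤ Real.sqrt (∑ j, ‖x j‖ ^ 2) := by
        apply Real.sqrt_le_sqrt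
        have : (x i) ^ 2 = ‖x i‖ ^ 2 := by rw [Real.norm_eq_abs, sq_abs]
        rw [this]
        exact Finset.single_le_sum (f := fun j => ‖x j‖ ^ 2)
          (fun j _ => by positivity) (Finset.mem_univ i)

lemma poly_bound (d t : ℕ) (q : MvPolynomial (Fin d) ℝ) (hq : q.totalDegree ≤ t) :
    ∃ C : ℝ, 0 ≤ C ∧ ∀ x : EuclideanSpace ℝ (Fin d),
      |MvPolynomial.eval (fun i => x i) q| ≤ C * (1 + ‖x‖) ^ t := by
  refine ⟨∑ α ∈ q.support, |MvPolynomial.coeff α q|,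
    Finset.sum_nonneg fun _ _ => abs_nonneg _, fun x => ?_⟩
  have h1x : (1:ℝ) ≤ 1 + ‖x‖ := by linarith [norm_nonneg x]
  rw [MvPolynomial.eval_eq]
  calc |∑ α ∈ q.support, MvPolynomial.coeff α q * ∏ i ∈ α.support, (x i) ^ α i|
      ≤ ∑ α ∈ q.support, |MvPolynomial.coeff α q * ∏ i ∈ α.support, (x i) ^ α i| :=
        Finset.abs_sum_le_sum_abs _ _
    _ ≤ ∑ α ∈ q.support, |MvPolynomial.coeff α q| * (1 + ‖x‖) ^ t := by
        refine Finset.sum_le_sum fun α hα => ?_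
        rw [abs_mul]
        refine mul_le_mul_of_nonneg_left ?_ (abs_nonneg _)
        calc |∏ i ∈ α.support, (x i) ^ α i|
            = ∏ i ∈ α.support, |x i| ^ α i := by
              rw [Finset.abs_prod]
              exact Finset.prod_congr rfl fun i _ => abs_pow _ _
          _ ≤ ∏ i ∈ α.support, (1 + ‖x‖) ^ α i := by
              refine Finset.prod_le_prod (fun i _ => by positivity) fun i _ => ?_
              exact pow_le_pow_left₀ (abs_nonneg _)
                ((coord_le_norm d x i).trans (by linarith)) _
          _ = (1 + ‖x‖) ^ (∑ i ∈ α.support, α i) := by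
              rw [Finset.prod_pow_eq_pow_sum]
          _ ≤ (1 + ‖x‖) ^ t := by
              apply pow_le_pow_right₀ h1x
              exact le_trans (MvPolynomial.le_totalDegree hα) hq
    _ = (∑ α ∈ q.support, |MvPolynomial.coeff α q|) * (1 + ‖x‖) ^ t := by
        rw [Finset.sum_mul]

lemma gauss_sq_eq (d : ℕ) (μ x : EuclideanSpace ℝ (Fin d)) :
    (mvGaussPDF d μ x) ^ 2
      = Real.exp (‖μ‖ ^ 2) * mvGaussPDF d ((2:ℝ) • μ) x * mvGaussPDF d 0 x := by
  have h2 : Real.exp (-‖x - μ‖ ^ 2 / 2) ^ 2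
      = Real.exp (‖μ‖ ^ 2) * Real.exp (-‖x - (2:ℝ) • μ‖ ^ 2 / 2)
        * Real.exp (-‖x - 0‖ ^ 2 / 2) := by
    rw [sq, ← Real.exp_add, ← Real.exp_add, ← Real.exp_add, Real.exp_eq_exp, sub_zero]
    rw [norm_sub_sq_real, norm_sub_sq_real, real_inner_smul_right, norm_smul]
    simp only [Real.norm_ofNat]
    ring
  unfold mvGaussPDF
  calc ((2 * Real.pi) ^ (-(d:ℝ)/2) * Real.exp (-‖x - μ‖ ^ 2 / 2)) ^ 2
      = ((2 * Real.pi) ^ (-(d:ℝ)/2)) ^ 2 * Real.exp (-‖x - μ‖ ^ 2 / 2) ^ 2 := by ring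
    _ = ((2 * Real.pi) ^ (-(d:ℝ)/2)) ^ 2 * (Real.exp (‖μ‖ ^ 2)
          * Real.exp (-‖x - (2:ℝ) • μ‖ ^ 2 / 2) * Real.exp (-‖x - 0‖ ^ 2 / 2)) := by rw [h2]
    _ = _ := by ring

set_option maxHeartbeats 1600000 in
/-- For `ε ∈ (0,1)`, `μ ∈ ℝ^d` and an `ε`-corruption `f` of the density of
`N(μ, I_d)` with visible-sample distribution `P'`: every polynomial `q` of total degree
at most `t` with `E_{z∼N(0,I_d)}[q(z)²] = 1` satisfies
`E_{x∼P'}[q(x)] ≤ (1/(1−ε))·(|E_{x∼N(μ,I_d)}[q(x)]| + √ε·e^{t‖μ‖²/2})`. -/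
theorem stmt15 (ε : ℝ) (d t : ℕ) (hd : 0 < d) (ht : 0 < t)
    (hε : ε ∈ Set.Ioo (0 : ℝ) 1)
    (μ : EuclideanSpace ℝ (Fin d))
    (f : EuclideanSpace ℝ (Fin d) → ℝ) (hf : Measurable f)
    (hsand : ∀ x, (1 - ε) * mvGaussPDF d μ x ≤ f x ∧ f x ≤ mvGaussPDF d μ x)
    (q : MvPolynomial (Fin d) ℝ) (hq : q.totalDegree ≤ t)
    (hnorm : (∫ z : EuclideanSpace ℝ (Fin d),
        (MvPolynomial.eval (fun i => z i) q) ^ 2 * mvGaussPDF d 0 z) = 1) :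
    (∫ x : EuclideanSpace ℝ (Fin d), MvPolynomial.eval (fun i => x i) q * f x) /
        (∫ x : EuclideanSpace ℝ (Fin d), f x) ≤
      (1 / (1 - ε)) *
        (|∫ x : EuclideanSpace ℝ (Fin d),
            MvPolynomial.eval (fun i => x i) q * mvGaussPDF d μ x| +
          Real.sqrt ε * Real.exp ((t : ℝ) * ‖μ‖ ^ 2 / 2)) := by
  obtain ⟨hε0, hε1⟩ := hε
  set Q : EuclideanSpace ℝ (Fin d) → ℝ := fun x => MvPolynomial.eval (fun i => x i) q with hQdef
  set p : EuclideanSpace ℝ (Fin d) → ℝ := mvGaussPDF d μ with hpdef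
  set p0 : EuclideanSpace ℝ (Fin d) → ℝ := mvGaussPDF d 0 with hp0def
  set p2 : EuclideanSpace ℝ (Fin d) → ℝ := mvGaussPDF d ((2:ℝ) • μ) with hp2def
  set c : ℝ := Real.sqrt ε * Real.exp (‖μ‖ ^ 2 / 2) with hcdef
  have hc : 0 < c := mul_pos (Real.sqrt_pos.mpr hε0) (Real.exp_pos _)
  set K : ℝ := ε ^ 2 * Real.exp (‖μ‖ ^ 2) / c with hKdef
  have hK0 : 0 ≤ K := by positivity
  have hQcont : Continuous Q := by
    have h1 : Continuous fun x : EuclideanSpace ℝ (Fin d) => (fun i => x i) := by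
      exact continuous_pi fun i => (EuclideanSpace.proj i).continuous
    exact (MvPolynomial.continuous_eval q).comp h1
  obtain ⟨C, hC0, hCb⟩ := poly_bound d t q hq
  have hppos : ∀ x, 0 < p x := fun x => mvGauss_pos d μ x
  have hp0pos : ∀ x, 0 < p0 x := fun x => mvGauss_pos d 0 x
  have hf0 : ∀ x, 0 ≤ f x := fun x =>
    le_trans (mul_nonneg (by linarith) (hppos x).le) (hsand x).1
  -- G = p - f
  set G : EuclideanSpace ℝ (Fin d) → ℝ := fun x => p x - f x with hGdef
  have hG0 : ∀ x, 0 ≤ G x := fun x => by simp [hGdef]; exact (hsand x).2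
  have hGε : ∀ x, G x ≤ ε * p x := fun x => by
    have := (hsand x).1
    simp only [hGdef]
    nlinarith [this]
  -- integrabilities
  have int_p : Integrable p := gauss_pdf_integrable d μ
  have int_p2 : Integrable p2 := gauss_pdf_integrable d _
  have int_f : Integrable f := by
    refine Integrable.mono' int_p hf.aestronglyMeasurable
      (Filter.Eventually.of_forall fun x => ?_)
    rw [Real.norm_eq_abs, abs_of_nonneg (hf0 x)]
    exact (hsand x).2
  have dom1 : Integrable (fun x : EuclideanSpace ℝ (Fin d) =>
      (C * (2 * Real.pi) ^ (-(d:ℝ)/2)) * ((1 + ‖x‖) ^ t * Real.exp (-‖x - μ‖ ^ 2 / 2))) :=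
    (poly_gauss_integrable d t μ).const_mul _
  have bound1 : ∀ x : EuclideanSpace ℝ (Fin d), |Q x| * p x ≤
      (C * (2 * Real.pi) ^ (-(d:ℝ)/2)) * ((1 + ‖x‖) ^ t * Real.exp (-‖x - μ‖ ^ 2 / 2)) := by
    intro x
    have h1 : |Q x| ≤ C * (1 + ‖x‖) ^ t := hCb x
    have h2 : p x = (2 * Real.pi) ^ (-(d:ℝ)/2) * Real.exp (-‖x - μ‖ ^ 2 / 2) := rfl
    calc |Q x| * p x ≤ (C * (1 + ‖x‖) ^ t) * p x :=
          mul_le_mul_of_nonneg_right h1 (hppos x).le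
      _ = (C * (2 * Real.pi) ^ (-(d:ℝ)/2)) * ((1 + ‖x‖) ^ t * Real.exp (-‖x - μ‖ ^ 2 / 2)) := by
          rw [h2]; ring
  have int_Qp : Integrable (fun x => Q x * p x) := by
    refine Integrable.mono' dom1
      (Continuous.aestronglyMeasurable (hQcont.mul (mvGauss_cont d μ)))
      (Filter.Eventually.of_forall fun x => ?_)
    rw [Real.norm_eq_abs, abs_mul, abs_of_nonneg (hppos x).le]
    exact bound1 x
  have int_Qf : Integrable (fun x => Q x * f x) := by
    refine Integrable.mono' dom1
      ((hQcont.measurable.mul hf).aestronglyMeasurable)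
      (Filter.Eventually.of_forall fun x => ?_)
    rw [Real.norm_eq_abs, abs_mul, abs_of_nonneg (hf0 x)]
    exact le_trans (mul_le_mul_of_nonneg_left (hsand x).2 (abs_nonneg _)) (bound1 x)
  have int_QG : Integrable (fun x => |Q x| * G x) := by
    refine Integrable.mono'
      ((poly_gauss_integrable d t μ).const_mul (ε * (C * (2 * Real.pi) ^ (-(d:ℝ)/2))))
      (((hQcont.abs.measurable).mul
        (((mvGauss_cont d μ).measurable).sub hf)).aestronglyMeasurable)
      (Filter.Eventually.of_forall fun x => ?_)
    rw [Real.norm_eq_abs, abs_of_nonneg (mul_nonneg (abs_nonneg _) (hG0 x))]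
    calc |Q x| * G x ≤ |Q x| * (ε * p x) :=
          mul_le_mul_of_nonneg_left (hGε x) (abs_nonneg _)
      _ = ε * (|Q x| * p x) := by ring
      _ ≤ ε * ((C * (2 * Real.pi) ^ (-(d:ℝ)/2)) * ((1 + ‖x‖) ^ t
            * Real.exp (-‖x - μ‖ ^ 2 / 2))) :=
          mul_le_mul_of_nonneg_left (bound1 x) hε0.le
      _ = (ε * (C * (2 * Real.pi) ^ (-(d:ℝ)/2))) * ((1 + ‖x‖) ^ t
            * Real.exp (-‖x - μ‖ ^ 2 / 2)) := by ring
  have int_Q2p0 : Integrable (fun x => Q x ^ 2 * p0 x) := by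
    refine Integrable.mono'
      ((poly_gauss_integrable d (2 * t) 0).const_mul (C ^ 2 * (2 * Real.pi) ^ (-(d:ℝ)/2)))
      (Continuous.aestronglyMeasurable ((hQcont.pow 2).mul (mvGauss_cont d 0)))
      (Filter.Eventually.of_forall fun x => ?_)
    rw [Real.norm_eq_abs, abs_of_nonneg (mul_nonneg (sq_nonneg _) (hp0pos x).le)]
    have h1 : Q x ^ 2 ≤ C ^ 2 * ((1 + ‖x‖) ^ t) ^ 2 := by
      rw [← sq_abs (Q x), ← mul_pow]
      exact pow_le_pow_left₀ (abs_nonneg _) (hCb x) 2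
    have h2 : p0 x = (2 * Real.pi) ^ (-(d:ℝ)/2) * Real.exp (-‖x - 0‖ ^ 2 / 2) := rfl
    calc Q x ^ 2 * p0 x ≤ (C ^ 2 * ((1 + ‖x‖) ^ t) ^ 2) * p0 x :=
          mul_le_mul_of_nonneg_right h1 (hp0pos x).le
      _ = (C ^ 2 * (2 * Real.pi) ^ (-(d:ℝ)/2)) * ((1 + ‖x‖) ^ (2 * t)
            * Real.exp (-‖x - 0‖ ^ 2 / 2)) := by
          rw [h2, ← pow_mul, mul_comm t 2]; ring
  -- key pointwise AM-GM bound
  have hid : ∀ x, p x ^ 2 = Real.exp (‖μ‖ ^ 2) * p2 x * p0 x := fun x => gauss_sq_eq d μ x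
  have hKc : K * c = ε ^ 2 * Real.exp (‖μ‖ ^ 2) := div_mul_cancel₀ _ hc.ne'
  have hpt : ∀ x, |Q x| * G x ≤ c / 2 * (Q x ^ 2 * p0 x) + K / 2 * p2 x := by
    intro x
    have h0 := hp0pos x
    have hsq := sq_nonneg (c * p0 x * |Q x| - G x)
    have hGb := hGε x
    have hGa := hG0 x
    have hpx := (hppos x).le
    have hqq : |Q x| ^ 2 = Q x ^ 2 := sq_abs (Q x)
    have hG2 : G x ^ 2 ≤ ε ^ 2 * p x ^ 2 := by nlinarith
    have hmain : 2 * (c * p0 x) * (|Q x| * G x)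
        ≤ 2 * (c * p0 x) * (c / 2 * (Q x ^ 2 * p0 x) + K / 2 * p2 x) := by
      have hexpand : 2 * (c * p0 x) * (c / 2 * (Q x ^ 2 * p0 x) + K / 2 * p2 x)
          = (c * p0 x) ^ 2 * Q x ^ 2 + (K * c) * (p0 x * p2 x) := by ring
      rw [hexpand, hKc]
      have : ε ^ 2 * Real.exp (‖μ‖ ^ 2) * (p0 x * p2 x) = ε ^ 2 * p x ^ 2 := by
        rw [hid x]; ring
      rw [this]
      nlinarith
    have hpos : 0 < 2 * (c * p0 x) := by positivity
    exact le_of_mul_le_mul_left hmain hpos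
  -- integral of the key bound
  have int_rhs : Integrable (fun x => c / 2 * (Q x ^ 2 * p0 x) + K / 2 * p2 x) :=
    (int_Q2p0.const_mul (c / 2)).add (int_p2.const_mul (K / 2))
  have key : ∫ x, |Q x| * G x ≤ c := by
    have h1 : ∫ x, |Q x| * G x ≤ ∫ x, (c / 2 * (Q x ^ 2 * p0 x) + K / 2 * p2 x) :=
      integral_mono int_QG int_rhs hpt
    have h2 : ∫ x, (c / 2 * (Q x ^ 2 * p0 x) + K / 2 * p2 x)
        = c / 2 * (∫ x, Q x ^ 2 * p0 x) + K / 2 * (∫ x, p2 x) := by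
      rw [integral_add (int_Q2p0.const_mul _) (int_p2.const_mul _),
        integral_const_mul, integral_const_mul]
    have h3 : (∫ x, Q x ^ 2 * p0 x) = 1 := hnorm
    have h4 : (∫ x, p2 x) = 1 := gauss_integral d _
    have hKle : K ≤ c := by
      rw [hKdef, div_le_iff₀ hc]
      have hc2 : c * c = ε * Real.exp (‖μ‖ ^ 2) := by
        rw [hcdef, mul_mul_mul_comm, Real.mul_self_sqrt hε0.le, ← Real.exp_add]
        norm_num
      rw [hc2]
      nlinarith [Real.exp_pos (‖μ‖ ^ 2)]
    rw [h2, h3, h4] at h1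
    linarith
  -- relate c to the final exponential
  have ht1 : (1:ℝ) ≤ (t:ℝ) := by exact_mod_cast ht
  have hcle : c ≤ Real.sqrt ε * Real.exp ((t : ℝ) * ‖μ‖ ^ 2 / 2) := by
    apply mul_le_mul_of_nonneg_left _ (Real.sqrt_nonneg ε)
    apply Real.exp_le_exp.2
    nlinarith [sq_nonneg ‖μ‖]
  -- numerator bound
  have int_QG' : Integrable (fun x => Q x * G x) := by
    refine (int_Qp.sub int_Qf).congr (Filter.Eventually.of_forall fun x => ?_)
    simp [hGdef]; ring
  have hsplit : ∫ x, Q x * f x = (∫ x, Q x * p x) - ∫ x, Q x * G x := by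
    rw [← integral_sub int_Qp int_QG']
    congr 1
    funext x
    simp [hGdef]; ring
  have habs : |∫ x, Q x * G x| ≤ ∫ x, |Q x| * G x := by
    have h := norm_integral_le_integral_norm (μ := volume) (fun x => Q x * G x)
    simp only [Real.norm_eq_abs] at h
    refine h.trans (le_of_eq ?_)
    congr 1
    funext x
    rw [abs_mul, abs_of_nonneg (hG0 x)]
  have hA : (∫ x, Q x * f x) ≤ |∫ x, Q x * p x|
      + Real.sqrt ε * Real.exp ((t : ℝ) * ‖μ‖ ^ 2 / 2) := by
    have h1 := le_abs_self (∫ x, Q x * p x)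
    have h2 := abs_le.1 habs
    rw [hsplit]
    linarith [key, hcle]
  -- denominator bound
  have hB : 1 - ε ≤ ∫ x, f x := by
    have h1 : ∫ x, (1 - ε) * p x ≤ ∫ x, f x :=
      integral_mono (int_p.const_mul _) int_f fun x => (hsand x).1
    rwa [integral_const_mul, hpdef, gauss_integral, mul_one] at h1
  have hBpos : 0 < ∫ x, f x := lt_of_lt_of_le (by linarith) hB
  have h1ε : 0 < 1 - ε := by linarith
  set R : ℝ := |∫ x, Q x * p x| + Real.sqrt ε * Real.exp ((t : ℝ) * ‖μ‖ ^ 2 / 2) with hRdef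
  have hR0 : 0 ≤ R := by positivity
  rw [show (1 / (1 - ε)) * R = R / (1 - ε) by ring]
  rcases le_or_gt (∫ x, Q x * f x) 0 with hA0 | hA0
  · have hle : (∫ x, Q x * f x) / (∫ x, f x) ≤ 0 :=
      div_nonpos_iff.mpr (Or.inr ⟨hA0, hBpos.le⟩)
    exact le_trans hle (by positivity)
  · exact div_le_div₀ hR0 hA h1ε hB
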